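/- Fix ξ₀ ∈ S^{d-1}, δ ∈ (0,1], R' > 1. Let W_δ = B_δ(ξ₀) ∩ S^{d-1}. Then for every ξ ∈ C(W_{δ/2}, (4/3)R') and every y ∈ ℝ^d \ C(W_δ, R'), one has |y − ξ| ≥ (δ/4)·|ξ|. -/
import Mathlib

theorem stmt10 {d : ℕ} (ξ₀ : EuclideanSpace ℝ (Fin d))
    (hξ₀ : ξ₀ ∈ Metric.sphere (0 : EuclideanSpace ℝ (Fin d)) 1)
    (δ R' : ℝ) (hδ : δ ∈ Set.Ioc (0 : ℝ) 1) (hR' : 1 < R')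
    (ξ y : EuclideanSpace ℝ (Fin d))
    -- `ξ ∈ C(W_{δ/2}, (4/3)R')`
    (hξnorm : (4 / 3) * R' < ‖ξ‖) (hξdir : ‖‖ξ‖⁻¹ • ξ - ξ₀‖ < δ / 2)
    -- `y ∉ C(W_δ, R')`
    (hy : ¬(R' < ‖y‖ ∧ y ≠ 0 ∧ ‖‖y‖⁻¹ • y - ξ₀‖ < δ)) :
    δ / 4 * ‖ξ‖ ≤ ‖y - ξ‖ := by
  obtain ⟨hδ0, hδ1⟩ := hδ
  have hR0 : (0:ℝ) < R' := lt_trans one_pos hR'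
  have hξpos : 0 < ‖ξ‖ := lt_trans (by positivity) hξnorm
  by_cases hc : δ / 4 * ‖ξ‖ ≤ |‖y‖ - ‖ξ‖|
  · calc δ / 4 * ‖ξ‖ ≤ |‖y‖ - ‖ξ‖| := hc
      _ ≤ ‖y - ξ‖ := abs_norm_sub_norm_le y ξ
  · push_neg at hc
    have habs := abs_lt.mp hc
    have hy1 : R' < ‖y‖ := by nlinarith [habs.1, habs.2]
    have hy0 : y ≠ 0 := by
      intro h; rw [h, norm_zero] at hy1; linarith
    have hdir : δ ≤ ‖‖y‖⁻¹ • y - ξ₀‖ := by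
      by_contra h
      push_neg at h
      exact hy ⟨hy1, hy0, h⟩
    set u := ‖y‖⁻¹ • y with hu_def
    set v := ‖ξ‖⁻¹ • ξ with hv_def
    have hu : ‖u‖ = 1 := norm_smul_inv_norm hy0
    have hdiff : δ / 2 ≤ ‖u - v‖ := by
      have h1 : ‖u - ξ₀‖ ≤ ‖u - v‖ + ‖v - ξ₀‖ := norm_sub_le_norm_sub_add_norm_sub u v ξ₀
      linarith
    have hyu : ‖y‖ • u = y := by
      rw [smul_smul, mul_inv_cancel₀ (norm_ne_zero_iff.mpr hy0), one_smul]
    have hξv : ‖ξ‖ • v = ξ := by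
      rw [smul_smul, mul_inv_cancel₀ (ne_of_gt hξpos), one_smul]
    have key : ‖ξ‖ • (u - v) = (y - ξ) - (‖y‖ - ‖ξ‖) • u := by
      rw [smul_sub, sub_smul, hyu, hξv]; abel
    have h1 : ‖ξ‖ * ‖u - v‖ ≤ ‖y - ξ‖ + |‖y‖ - ‖ξ‖| :=
      calc ‖ξ‖ * ‖u - v‖ = ‖‖ξ‖ • (u - v)‖ := by
            rw [norm_smul, Real.norm_eq_abs, abs_of_pos hξpos]
        _ ≤ ‖y - ξ‖ + ‖(‖y‖ - ‖ξ‖) • u‖ := by rw [key]; exact norm_sub_le _ _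
        _ = ‖y - ξ‖ + |‖y‖ - ‖ξ‖| := by rw [norm_smul, Real.norm_eq_abs, hu, mul_one]
    have h2 : ‖ξ‖ * (δ / 2) ≤ ‖ξ‖ * ‖u - v‖ :=
      mul_le_mul_of_nonneg_left hdiff (le_of_lt hξpos)
    linarith
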